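/- Let F be the zero-dimensional complex with n nodes, i.e. F consists exactly of all singletons {i}, i ∈ I_n. Then Q(F) is isomorphic as a k-algebra to the commutative polynomial algebra k[x_1,…,x_n] in n variables, via an isomorphism sending the image of u({i}) to x_i. -/

import Mathlib

/-- Index type for the generators `z_{A,i}` of `Qₙ`: pairs `(A, i)` with
`A ⊆ Iₙ` and `i ∉ A`. -/
abbrev QIdx (n : ℕ) := {p : Finset (Fin n) × Fin n // p.2 ∉ p.1}

/-- The defining relations of the algebra `Qₙ`:
additive relations `z_{A∪{i},j} + z_{A,i} = z_{A∪{j},i} + z_{A,j}` and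
multiplicative relations `z_{A∪{i},j} · z_{A,i} = z_{A∪{j},i} · z_{A,j}`. -/
inductive QnRel (K : Type*) [Field K] (n : ℕ) :
    FreeAlgebra K (QIdx n) → FreeAlgebra K (QIdx n) → Prop
  | add (A : Finset (Fin n)) (i j : Fin n) (hi : i ∉ A) (hj : j ∉ A) (hij : i ≠ j) :
      QnRel K n
        (FreeAlgebra.ι K (⟨(insert i A, j), by simp [Finset.mem_insert, hij.symm, hj]⟩ : QIdx n)
          + FreeAlgebra.ι K (⟨(A, i), hi⟩ : QIdx n))
        (FreeAlgebra.ι K (⟨(insert j A, i), by simp [Finset.mem_insert, hij, hi]⟩ : QIdx n)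
          + FreeAlgebra.ι K (⟨(A, j), hj⟩ : QIdx n))
  | mul (A : Finset (Fin n)) (i j : Fin n) (hi : i ∉ A) (hj : j ∉ A) (hij : i ≠ j) :
      QnRel K n
        (FreeAlgebra.ι K (⟨(insert i A, j), by simp [Finset.mem_insert, hij.symm, hj]⟩ : QIdx n)
          * FreeAlgebra.ι K (⟨(A, i), hi⟩ : QIdx n))
        (FreeAlgebra.ι K (⟨(insert j A, i), by simp [Finset.mem_insert, hij, hi]⟩ : QIdx n)
          * FreeAlgebra.ι K (⟨(A, j), hj⟩ : QIdx n))

/-- The algebra `Qₙ`: the quotient of the free associative unital `K`-algebra on the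
generators `z_{A,i}` by the two-sided ideal generated by the defining relations. -/
abbrev Qn (K : Type*) [Field K] (n : ℕ) := RingQuot (QnRel K n)

/-- The image `z_{A,i}` of a generator in `Qₙ` (junk value `0` if `i ∈ A`). -/
noncomputable def zQ (K : Type*) [Field K] (n : ℕ) (A : Finset (Fin n)) (i : Fin n) : Qn K n :=
  if h : i ∉ A then RingQuot.mkAlgHom K (QnRel K n) (FreeAlgebra.ι K (⟨(A, i), h⟩ : QIdx n))
  else 0

/-- The element `u(A) = Σ_{D ⊆ A \ {i}} (−1)^{|A|−|D|} z_{D,i}` for the choice `i = min A`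
(for nonempty `A`), with `u(∅) = 1`. -/
noncomputable def uQ (K : Type*) [Field K] (n : ℕ) (A : Finset (Fin n)) : Qn K n :=
  if h : A.Nonempty then
    ∑ D ∈ (A.erase (A.min' h)).powerset,
      (-1 : Qn K n) ^ (A.card - D.card) * zQ K n D (A.min' h)
  else 1

/-- The relations defining `Q(F)`: each `u(A)` with nonempty `A ∉ F` is set to `0`. -/
inductive QcRel (K : Type*) [Field K] (n : ℕ) (F : Set (Finset (Fin n))) :
    Qn K n → Qn K n → Prop
  | rel (A : Finset (Fin n)) (hA : A.Nonempty) (hAF : A ∉ F) : QcRel K n F (uQ K n A) 0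

/-- The algebra `Q(F)`: the quotient of `Qₙ` by the two-sided ideal generated by all
`u(A)` with nonempty `A ∉ F`. -/
abbrev Qc (K : Type*) [Field K] (n : ℕ) (F : Set (Finset (Fin n))) := RingQuot (QcRel K n F)

/-- The image of `u(A)` in `Q(F)`. -/
noncomputable def uc (K : Type*) [Field K] (n : ℕ) (F : Set (Finset (Fin n)))
    (A : Finset (Fin n)) : Qc K n F :=
  RingQuot.mkAlgHom K (QcRel K n F) (uQ K n A)

/-- The zero-dimensional complex on `Iₙ`, consisting exactly of all singletons. -/
def zeroComplex (n : ℕ) : Set (Finset (Fin n)) := {A | ∃ i : Fin n, A = {i}}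

section ZeroDimAux

open Finset

lemma neg_pow_succ_mul {R : Type*} [Ring R] (e : ℕ) (x : R) :
    (-1 : R) ^ (e + 1) * x = -((-1 : R) ^ e * x) := by
  rw [pow_succ, mul_assoc, neg_one_mul, mul_neg]

lemma neg_pow_pair {R : Type*} [Ring R] (e : ℕ) (x y : R) :
    (-1 : R) ^ (e + 1) * x + (-1 : R) ^ e * y = (-1 : R) ^ e * (y - x) := by
  rw [neg_pow_succ_mul, mul_sub]; abel

/-- Abstract Möbius inversion over powersets, in any (possibly noncommutative) ring. -/
lemma mobius_aux {R : Type*} [Ring R] {α : Type*} [DecidableEq α] (A : Finset α) :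
    ∀ g : Finset α → R,
      ∑ B ∈ A.powerset, ∑ D ∈ B.powerset, (-1 : R) ^ (B.card - D.card) * g D = g A := by
  induction A using Finset.induction_on with
  | empty => intro g; simp
  | @insert a s ha ih =>
    intro g
    rw [Finset.sum_powerset_insert ha]
    have hterm : ∀ B ∈ s.powerset,
        (∑ D ∈ (insert a B).powerset, (-1 : R) ^ ((insert a B).card - D.card) * g D)
          = -(∑ D ∈ B.powerset, (-1 : R) ^ (B.card - D.card) * g D)
            + ∑ D ∈ B.powerset, (-1 : R) ^ (B.card - D.card) * g (insert a D) := by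
      intro B hB
      have haB : a ∉ B := fun h => ha ((Finset.mem_powerset.1 hB) h)
      rw [Finset.sum_powerset_insert haB, Finset.card_insert_of_notMem haB, ← Finset.sum_neg_distrib]
      congr 1
      · apply Finset.sum_congr rfl
        intro D hD
        have hd : D.card ≤ B.card := Finset.card_le_card (Finset.mem_powerset.1 hD)
        have he : B.card + 1 - D.card = (B.card - D.card) + 1 := by omega
        rw [he, neg_pow_succ_mul]
      · apply Finset.sum_congr rfl
        intro D hD
        have haD : a ∉ D := fun h => haB ((Finset.mem_powerset.1 hD) h)
        rw [Finset.card_insert_of_notMem haD]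
        have hd : D.card ≤ B.card := Finset.card_le_card (Finset.mem_powerset.1 hD)
        congr 2
        omega
    rw [Finset.sum_congr rfl hterm, Finset.sum_add_distrib, Finset.sum_neg_distrib,
      add_neg_cancel_left]
    exact ih (fun D => g (insert a D))

variable (K : Type*) [Field K] (n : ℕ)

/-- `v(A,i) = Σ_{D ⊆ A} (−1)^{|A|−|D|} z_{D,i}`. -/
noncomputable def vQ (A : Finset (Fin n)) (i : Fin n) : Qn K n :=
  ∑ D ∈ A.powerset, (-1 : Qn K n) ^ (A.card - D.card) * zQ K n D i

lemma zQ_add_rel (A : Finset (Fin n)) (i j : Fin n) (hi : i ∉ A) (hj : j ∉ A) (hij : i ≠ j) :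
    zQ K n (insert i A) j + zQ K n A i = zQ K n (insert j A) i + zQ K n A j := by
  have h1 : j ∉ insert i A := by simp [Finset.mem_insert, hij.symm, hj]
  have h2 : i ∉ insert j A := by simp [Finset.mem_insert, hij, hi]
  rw [zQ, zQ, zQ, zQ, dif_pos h1, dif_pos hi, dif_pos h2, dif_pos hj, ← map_add, ← map_add]
  exact RingQuot.mkAlgHom_rel K (QnRel.add A i j hi hj hij)

lemma zQ_mul_rel (A : Finset (Fin n)) (i j : Fin n) (hi : i ∉ A) (hj : j ∉ A) (hij : i ≠ j) :
    zQ K n (insert i A) j * zQ K n A i = zQ K n (insert j A) i * zQ K n A j := by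
  have h1 : j ∉ insert i A := by simp [Finset.mem_insert, hij.symm, hj]
  have h2 : i ∉ insert j A := by simp [Finset.mem_insert, hij, hi]
  rw [zQ, zQ, zQ, zQ, dif_pos h1, dif_pos hi, dif_pos h2, dif_pos hj, ← map_mul, ← map_mul]
  exact RingQuot.mkAlgHom_rel K (QnRel.mul A i j hi hj hij)

lemma zQ_sub_rel (A : Finset (Fin n)) (i j : Fin n) (hi : i ∉ A) (hj : j ∉ A) (hij : i ≠ j) :
    zQ K n (insert j A) i - zQ K n A i = zQ K n (insert i A) j - zQ K n A j := by
  rw [sub_eq_sub_iff_add_eq_add]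
  exact (zQ_add_rel K n A i j hi hj hij).symm

/-- Independence of the choice of the distinguished index in `v`. -/
lemma vQ_swap (S : Finset (Fin n)) (i j : Fin n) (hi : i ∉ S) (hj : j ∉ S) (hij : i ≠ j) :
    vQ K n (insert j S) i = vQ K n (insert i S) j := by
  rw [vQ, vQ, Finset.sum_powerset_insert hj, Finset.sum_powerset_insert hi,
    Finset.card_insert_of_notMem hj, Finset.card_insert_of_notMem hi,
    ← Finset.sum_add_distrib, ← Finset.sum_add_distrib]
  apply Finset.sum_congr rfl
  intro D hD
  have hDS : D ⊆ S := Finset.mem_powerset.1 hD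
  have hiD : i ∉ D := fun h => hi (hDS h)
  have hjD : j ∉ D := fun h => hj (hDS h)
  have hd : D.card ≤ S.card := Finset.card_le_card hDS
  have he : S.card + 1 - D.card = (S.card - D.card) + 1 := by omega
  rw [Finset.card_insert_of_notMem hjD, Finset.card_insert_of_notMem hiD]
  have he2 : S.card + 1 - (D.card + 1) = S.card - D.card := by omega
  rw [he, he2, neg_pow_pair, neg_pow_pair, zQ_sub_rel K n D i j hiD hjD hij]

lemma zQ_eq_sum_vQ (A : Finset (Fin n)) (i : Fin n) :
    zQ K n A i = ∑ B ∈ A.powerset, vQ K n B i :=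
  (mobius_aux A (fun D => zQ K n D i)).symm

lemma uQ_eq_neg_vQ_min (A : Finset (Fin n)) (hA : A.Nonempty) :
    uQ K n A = - vQ K n (A.erase (A.min' hA)) (A.min' hA) := by
  rw [uQ, dif_pos hA, vQ, ← Finset.sum_neg_distrib]
  apply Finset.sum_congr rfl
  intro D hD
  have hD2 : D ⊆ A.erase (A.min' hA) := Finset.mem_powerset.1 hD
  have hcard : (A.erase (A.min' hA)).card = A.card - 1 :=
    Finset.card_erase_of_mem (A.min'_mem hA)
  have h1 : 1 ≤ A.card := Finset.card_pos.2 hA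
  have hd : D.card ≤ (A.erase (A.min' hA)).card := Finset.card_le_card hD2
  have he : A.card - D.card = ((A.erase (A.min' hA)).card - D.card) + 1 := by omega
  rw [he, neg_pow_succ_mul]

lemma uQ_eq_neg_vQ (A : Finset (Fin n)) (hA : A.Nonempty) (i : Fin n) (hiA : i ∈ A) :
    uQ K n A = - vQ K n (A.erase i) i := by
  rw [uQ_eq_neg_vQ_min K n A hA]
  set m := A.min' hA with hm
  have hmA : m ∈ A := A.min'_mem hA
  rcases eq_or_ne i m with rfl | hne
  · rfl
  · set S := (A.erase i).erase m with hS
    have hiS : i ∉ S := by simp [hS, Finset.mem_erase]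
    have hmS : m ∉ S := by simp [hS, Finset.mem_erase]
    have h1 : A.erase m = insert i S := by
      ext x
      simp only [hS, Finset.mem_erase, Finset.mem_insert]
      constructor
      · rintro ⟨hxm, hxA⟩
        by_cases hxi : x = i
        · exact Or.inl hxi
        · exact Or.inr ⟨hxm, hxi, hxA⟩
      · rintro (rfl | ⟨hxm, hxi, hxA⟩)
        · exact ⟨hne, hiA⟩
        · exact ⟨hxm, hxA⟩
    have h2 : A.erase i = insert m S := by
      ext x
      simp only [hS, Finset.mem_erase, Finset.mem_insert]
      constructor
      · rintro ⟨hxi, hxA⟩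
        by_cases hxm : x = m
        · exact Or.inl hxm
        · exact Or.inr ⟨hxm, hxi, hxA⟩
      · rintro (rfl | ⟨hxm, hxi, hxA⟩)
        · exact ⟨fun h => hne h.symm, hmA⟩
        · exact ⟨hxi, hxA⟩
    rw [h1, h2, vQ_swap K n S m i hmS hiS (fun h => hne h.symm)]

lemma uQ_singleton (i : Fin n) : uQ K n ({i} : Finset (Fin n)) = - zQ K n ∅ i := by
  rw [uQ, dif_pos (Finset.singleton_nonempty i)]
  simp only [Finset.min'_singleton, Finset.erase_singleton, Finset.powerset_empty,
    Finset.sum_singleton, Finset.card_singleton, Finset.card_empty, Nat.sub_zero, pow_one]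
  exact neg_one_mul (zQ K n ∅ i)

end ZeroDimAux

section ZeroDimIso

open Finset MvPolynomial

variable (K : Type*) [Field K] (n : ℕ)

/-- Sum of `(-1)^(|B|-|D|)` over subsets `D` of a nonempty `B` vanishes. -/
lemma sum_neg_one_pow_sub {R : Type*} [Ring R] {α : Type*} [DecidableEq α]
    (B : Finset α) (hB : B.Nonempty) :
    ∑ D ∈ B.powerset, (-1 : R) ^ (B.card - D.card) = 0 := by
  have h0 : ∑ D ∈ B.powerset, (-1 : R) ^ D.card = 0 := by
    have h1 := Finset.sum_powerset_neg_one_pow_card_of_nonempty (x := B) hB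
    have h2 : ((∑ D ∈ B.powerset, (-1 : ℤ) ^ D.card : ℤ) : R)
        = ∑ D ∈ B.powerset, (-1 : R) ^ D.card := by push_cast; rfl
    rw [← h2, h1, Int.cast_zero]
  calc ∑ D ∈ B.powerset, (-1 : R) ^ (B.card - D.card)
      = ∑ D ∈ B.powerset, (-1 : R) ^ B.card * (-1 : R) ^ D.card := by
        apply Finset.sum_congr rfl
        intro D hD
        have hd : D.card ≤ B.card := Finset.card_le_card (Finset.mem_powerset.1 hD)
        rw [← pow_add, neg_one_pow_eq_pow_mod_two,
          neg_one_pow_eq_pow_mod_two (n := B.card + D.card)]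
        congr 1
        omega
    _ = (-1 : R) ^ B.card * ∑ D ∈ B.powerset, (-1 : R) ^ D.card := by rw [Finset.mul_sum]
    _ = 0 := by rw [h0, mul_zero]

/-- The algebra map `Qₙ → K[x]` sending every `z_{A,i}` to `-xᵢ`. -/
noncomputable def phiQ : Qn K n →ₐ[K] MvPolynomial (Fin n) K :=
  RingQuot.liftAlgHom K ⟨FreeAlgebra.lift K (fun p : QIdx n => -(MvPolynomial.X p.1.2)), by
    intro x y h
    induction h with
    | add A i j hi hj hij => simp only [map_add, FreeAlgebra.lift_ι_apply]; ring
    | mul A i j hi hj hij => simp only [map_mul, FreeAlgebra.lift_ι_apply]; ring⟩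

lemma phiQ_zQ (A : Finset (Fin n)) (i : Fin n) (h : i ∉ A) :
    phiQ K n (zQ K n A i) = -(MvPolynomial.X i) := by
  rw [zQ, dif_pos h, phiQ, RingQuot.liftAlgHom_mkAlgHom_apply, FreeAlgebra.lift_ι_apply]

lemma phiQ_vQ (B : Finset (Fin n)) (i : Fin n) (hi : i ∉ B) (hB : B.Nonempty) :
    phiQ K n (vQ K n B i) = 0 := by
  rw [vQ, map_sum]
  have : ∀ D ∈ B.powerset, phiQ K n ((-1 : Qn K n) ^ (B.card - D.card) * zQ K n D i)
      = (-1 : MvPolynomial (Fin n) K) ^ (B.card - D.card) * -(MvPolynomial.X i) := by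
    intro D hD
    have hiD : i ∉ D := fun h => hi ((Finset.mem_powerset.1 hD) h)
    rw [map_mul, map_pow, map_neg, map_one, phiQ_zQ K n D i hiD]
  rw [Finset.sum_congr rfl this, ← Finset.sum_mul, sum_neg_one_pow_sub B hB, zero_mul]

lemma card_two_le_of_not_singleton {A : Finset (Fin n)} (hA : A.Nonempty) (hAF : A ∉ zeroComplex n) :
    2 ≤ A.card := by
  rcases Nat.lt_or_ge A.card 2 with h | h
  · exfalso
    interval_cases h' : A.card
    · exact hA.ne_empty (Finset.card_eq_zero.mp h')
    · obtain ⟨a, rfl⟩ := Finset.card_eq_one.mp h'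
      exact hAF ⟨a, rfl⟩
  · exact h

lemma phiQ_uQ_zero (A : Finset (Fin n)) (hA : A.Nonempty) (hAF : A ∉ zeroComplex n) :
    phiQ K n (uQ K n A) = 0 := by
  have h2 := card_two_le_of_not_singleton n hA hAF
  have hm := A.min'_mem hA
  have hne : (A.erase (A.min' hA)).Nonempty := by
    rw [← Finset.card_pos, Finset.card_erase_of_mem hm]
    omega
  rw [uQ_eq_neg_vQ_min K n A hA, map_neg,
    phiQ_vQ K n _ _ (Finset.notMem_erase _ _) hne, neg_zero]

/-- The induced map `Q(F) → K[x]` for the zero-dimensional complex. -/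
noncomputable def psiQ : Qc K n (zeroComplex n) →ₐ[K] MvPolynomial (Fin n) K :=
  RingQuot.liftAlgHom K ⟨phiQ K n, by
    rintro x y ⟨A, hA, hAF⟩
    rw [map_zero]
    exact phiQ_uQ_zero K n A hA hAF⟩

/-- Shorthand for the quotient map `Qₙ → Q(F)`. -/
noncomputable def picQ : Qn K n →ₐ[K] Qc K n (zeroComplex n) :=
  RingQuot.mkAlgHom K (QcRel K n (zeroComplex n))

lemma psiQ_picQ (x : Qn K n) : psiQ K n (picQ K n x) = phiQ K n x := by
  rw [psiQ, picQ, RingQuot.liftAlgHom_mkAlgHom_apply]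

lemma picQ_uQ_zero (A : Finset (Fin n)) (hA : A.Nonempty) (hAF : A ∉ zeroComplex n) :
    picQ K n (uQ K n A) = 0 := by
  have := RingQuot.mkAlgHom_rel K (QcRel.rel (K := K) (n := n) (F := zeroComplex n) A hA hAF)
  rw [map_zero] at this
  exact this

lemma picQ_vQ_zero (B : Finset (Fin n)) (i : Fin n) (hi : i ∉ B) (hB : B.Nonempty) :
    picQ K n (vQ K n B i) = 0 := by
  have h1 : vQ K n B i = - uQ K n (insert i B) := by
    rw [uQ_eq_neg_vQ K n (insert i B) (Finset.insert_nonempty i B) i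
      (Finset.mem_insert_self i B), Finset.erase_insert hi, neg_neg]
  have h2 : insert i B ∉ zeroComplex n := by
    rintro ⟨a, ha⟩
    have := Finset.card_insert_of_notMem hi
    rw [ha, Finset.card_singleton] at this
    have := Finset.card_pos.2 hB
    omega
  rw [h1, map_neg, picQ_uQ_zero K n _ (Finset.insert_nonempty i B) h2]
  simp

lemma picQ_zQ_const (A : Finset (Fin n)) (i : Fin n) (hi : i ∉ A) :
    picQ K n (zQ K n A i) = picQ K n (zQ K n ∅ i) := by
  rw [zQ_eq_sum_vQ K n A i, map_sum]
  rw [Finset.sum_eq_single_of_mem ∅ (Finset.empty_mem_powerset A) ?_]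
  · congr 1
    rw [vQ]
    simp
  · intro B hB hne
    have hiB : i ∉ B := fun h => hi ((Finset.mem_powerset.1 hB) h)
    exact picQ_vQ_zero K n B i hiB (Finset.nonempty_of_ne_empty hne)

lemma picQ_comm (i j : Fin n) :
    picQ K n (zQ K n ∅ i) * picQ K n (zQ K n ∅ j)
      = picQ K n (zQ K n ∅ j) * picQ K n (zQ K n ∅ i) := by
  rcases eq_or_ne i j with rfl | hij
  · rfl
  · have h := zQ_mul_rel K n ∅ i j (Finset.notMem_empty i) (Finset.notMem_empty j) hij
    have h2 := congrArg (picQ K n) h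
    rw [map_mul, map_mul,
      picQ_zQ_const K n (insert i ∅) j (by simp [hij.symm]),
      picQ_zQ_const K n (insert j ∅) i (by simp [hij])] at h2
    exact h2.symm

/-- The composite map `FreeAlgebra → Qₙ → Q(F)`. -/
noncomputable def fFA : FreeAlgebra K (QIdx n) →ₐ[K] Qc K n (zeroComplex n) :=
  (picQ K n).comp (RingQuot.mkAlgHom K (QnRel K n))

lemma fFA_ι (p : QIdx n) : fFA K n (FreeAlgebra.ι K p) = picQ K n (zQ K n p.1.1 p.1.2) := by
  rw [fFA, AlgHom.comp_apply]
  congr 1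
  rw [zQ, dif_pos p.2]

lemma fFA_comm (a b : FreeAlgebra K (QIdx n)) : Commute (fFA K n a) (fFA K n b) := by
  induction a using FreeAlgebra.induction with
  | grade0 r =>
    rw [AlgHom.commutes]
    exact Algebra.commutes r _
  | grade1 p =>
    induction b using FreeAlgebra.induction with
    | grade0 r =>
      rw [AlgHom.commutes]
      exact (Algebra.commutes r _).symm
    | grade1 q =>
      rw [fFA_ι, fFA_ι, picQ_zQ_const K n p.1.1 p.1.2 p.2, picQ_zQ_const K n q.1.1 q.1.2 q.2]
      exact picQ_comm K n p.1.2 q.1.2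
    | mul x y hx hy => rw [map_mul]; exact hx.mul_right hy
    | add x y hx hy => rw [map_add]; exact hx.add_right hy
  | mul x y hx hy => rw [map_mul]; exact hx.mul_left hy
  | add x y hx hy => rw [map_add]; exact hx.add_left hy

lemma fFA_surjective : Function.Surjective (fFA K n) := by
  intro x
  obtain ⟨y, hy⟩ := RingQuot.mkAlgHom_surjective K (QcRel K n (zeroComplex n)) x
  obtain ⟨a, ha⟩ := RingQuot.mkAlgHom_surjective K (QnRel K n) y
  refine ⟨a, ?_⟩
  rw [fFA, AlgHom.comp_apply, ha, picQ]
  exact hy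

lemma qc_mul_comm (x y : Qc K n (zeroComplex n)) : x * y = y * x := by
  obtain ⟨a, rfl⟩ := fFA_surjective K n x
  obtain ⟨b, rfl⟩ := fFA_surjective K n y
  exact fFA_comm K n a b

/-- `Q(F)` is a commutative ring for the zero-dimensional complex. -/
@[reducible]
noncomputable def qcCommRing : CommRing (Qc K n (zeroComplex n)) :=
  { (inferInstance : Ring (Qc K n (zeroComplex n))) with mul_comm := qc_mul_comm K n }

/-- The inverse algebra map `K[x] → Q(F)`. -/
noncomputable def chiQ : MvPolynomial (Fin n) K →ₐ[K] Qc K n (zeroComplex n) :=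
  letI := qcCommRing K n
  MvPolynomial.aeval (fun i : Fin n => -(picQ K n (zQ K n ∅ i)))

lemma chiQ_X (i : Fin n) : chiQ K n (MvPolynomial.X i) = -(picQ K n (zQ K n ∅ i)) := by
  letI := qcCommRing K n
  rw [chiQ]
  exact MvPolynomial.aeval_X _ i

lemma psiQ_chiQ : (psiQ K n).comp (chiQ K n) = AlgHom.id K (MvPolynomial (Fin n) K) := by
  apply MvPolynomial.algHom_ext
  intro i
  rw [AlgHom.comp_apply, chiQ_X]
  have hneg : psiQ K n (-(picQ K n (zQ K n ∅ i))) = -(psiQ K n (picQ K n (zQ K n ∅ i))) :=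
    map_neg (psiQ K n) (picQ K n (zQ K n ∅ i))
  rw [hneg, psiQ_picQ, phiQ_zQ K n ∅ i (Finset.notMem_empty i), neg_neg, AlgHom.id_apply]

lemma chiQ_psiQ : (chiQ K n).comp (psiQ K n) = AlgHom.id K (Qc K n (zeroComplex n)) := by
  apply RingQuot.ringQuot_ext'
  apply RingQuot.ringQuot_ext'
  apply FreeAlgebra.hom_ext
  funext p
  simp only [Function.comp_apply, AlgHom.coe_comp, AlgHom.coe_id, id_eq]
  have h1 : RingQuot.mkAlgHom K (QnRel K n) (FreeAlgebra.ι K p) = zQ K n p.1.1 p.1.2 := by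
    rw [zQ, dif_pos p.2]
  rw [h1]
  show chiQ K n (psiQ K n (picQ K n (zQ K n p.1.1 p.1.2))) = picQ K n (zQ K n p.1.1 p.1.2)
  have hneg : chiQ K n (-(MvPolynomial.X (R := K) p.1.2)) = -(chiQ K n (MvPolynomial.X p.1.2)) :=
    map_neg (chiQ K n) (MvPolynomial.X p.1.2)
  rw [psiQ_picQ, phiQ_zQ K n p.1.1 p.1.2 p.2, hneg, chiQ_X,
    picQ_zQ_const K n p.1.1 p.1.2 p.2]
  exact neg_neg (picQ K n (zQ K n ∅ p.1.2))

lemma psiQ_uc (i : Fin n) :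
    psiQ K n (uc K n (zeroComplex n) ({i} : Finset (Fin n))) = MvPolynomial.X i := by
  have : uc K n (zeroComplex n) ({i} : Finset (Fin n)) = picQ K n (uQ K n {i}) := rfl
  have hneg : picQ K n (-(zQ K n ∅ i)) = -(picQ K n (zQ K n ∅ i)) :=
    map_neg (picQ K n) (zQ K n ∅ i)
  have hneg2 : psiQ K n (-(picQ K n (zQ K n ∅ i))) = -(psiQ K n (picQ K n (zQ K n ∅ i))) :=
    map_neg (psiQ K n) (picQ K n (zQ K n ∅ i))
  rw [this, uQ_singleton, hneg, hneg2, psiQ_picQ,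
    phiQ_zQ K n ∅ i (Finset.notMem_empty i), neg_neg]

end ZeroDimIso

/-- For the zero-dimensional complex `F` (all singletons), `Q(F)` is isomorphic as a
`K`-algebra to the commutative polynomial algebra `K[x₁,…,xₙ]`, via an isomorphism
sending `u({i})` to `xᵢ`. -/
theorem zero_dim_iso_polynomial (K : Type*) [Field K] (n : ℕ) :
    ∃ e : Qc K n (zeroComplex n) ≃ₐ[K] MvPolynomial (Fin n) K,
      ∀ i : Fin n, e (uc K n (zeroComplex n) {i}) = MvPolynomial.X i := by
  refine ⟨AlgEquiv.ofAlgHom (psiQ K n) (chiQ K n) (psiQ_chiQ K n) (chiQ_psiQ K n), ?_⟩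
  intro i
  exact psiQ_uc K n i
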